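/- For integers 1 ≤ s ≤ N, the convex hull of the set of s-sparse unit-Euclidean-norm-bounded vectors satisfies the inclusions conv(Σ_s^N ∩ B₂^N) ⊆ K_s^N ⊆ 2·conv(Σ_s^N ∩ B₂^N), where K_s^N := {x ∈ ℝ^N : ‖x‖₂ ≤ 1 and ‖x‖₁ ≤ √s} and Σ_s^N is the set of vectors with at most s nonzero entries. -/

import Mathlib

open Pointwise

open Finset
noncomputable def csgn (a : ℝ) : ℝ := if 0 < a then 1 else -1

lemma abs_add_csgn {a : ℝ} (t : ℝ) (ha : a ≠ 0) (ht : 0 ≤ t) : |a + t * csgn a| = |a| + t := by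
  unfold csgn
  rcases ha.lt_or_gt with h | h
  · rw [if_neg (not_lt.2 h.le), abs_of_neg h, abs_of_neg (by linarith)]; ring
  · rw [if_pos h, abs_of_pos h, abs_of_pos (by linarith)]; ring

lemma abs_sub_csgn {a : ℝ} (t : ℝ) (ha : a ≠ 0) (ht0 : 0 ≤ t) (ht : t ≤ |a|) :
    |a - t * csgn a| = |a| - t := by
  unfold csgn
  rcases ha.lt_or_gt with h | h
  · rw [abs_of_neg h] at ht
    rw [if_neg (not_lt.2 h.le), abs_of_neg h, abs_of_nonpos (by linarith)]; ring
  · rw [abs_of_pos h] at ht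
    rw [if_pos h, abs_of_pos h, abs_of_nonneg (by linarith)]; ring

noncomputable def cmove {N : ℕ} (c : ℝ) (i j : Fin N) (z : EuclideanSpace ℝ (Fin N)) :
    EuclideanSpace ℝ (Fin N) :=
  z + (min (c - |z i|) |z j|) •
    (EuclideanSpace.single i (csgn (z i)) - EuclideanSpace.single j (csgn (z j)))

lemma cmove_apply {N : ℕ} (c : ℝ) (i j : Fin N) (z : EuclideanSpace ℝ (Fin N)) (k : Fin N) :
    cmove c i j z k = z k + (min (c - |z i|) |z j|) *
      ((if k = i then csgn (z i) else 0) - (if k = j then csgn (z j) else 0)) := by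
  simp [cmove, EuclideanSpace.single_apply, mul_sub]

lemma cmove_step {N : ℕ} {c : ℝ} (hc : 0 < c) {i j : Fin N} (hij : i ≠ j)
    (z : EuclideanSpace ℝ (Fin N)) (hi1 : z i ≠ 0) (hi2 : |z i| < c)
    (hj1 : z j ≠ 0) (hj2 : |z j| < c) (hinf : ∀ k, |z k| ≤ c) :
    (∀ k, |cmove c i j z k| ≤ c) ∧ ((∑ k, |cmove c i j z k|) = ∑ k, |z k|) ∧
    (Finset.univ.filter (fun k => cmove c i j z k ≠ 0 ∧ |cmove c i j z k| < c) ⊂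
      Finset.univ.filter (fun k => z k ≠ 0 ∧ |z k| < c)) := by
  set t := min (c - |z i|) |z j| with htdef
  have ht0 : 0 < t := lt_min (by linarith) (abs_pos.2 hj1)
  have hti : t ≤ c - |z i| := min_le_left _ _
  have htj : t ≤ |z j| := min_le_right _ _
  have hmi : cmove c i j z i = z i + t * csgn (z i) := by
    rw [cmove_apply, if_pos rfl, if_neg hij]; ring
  have hmj : cmove c i j z j = z j - t * csgn (z j) := by
    rw [cmove_apply, if_neg hij.symm, if_pos rfl]; ring
  have hmk : ∀ k, k ≠ i → k ≠ j → cmove c i j z k = z k := by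
    intro k hki hkj
    rw [cmove_apply]; simp [hki, hkj]
  have habsi : |cmove c i j z i| = |z i| + t := by rw [hmi]; exact abs_add_csgn t hi1 ht0.le
  have habsj : |cmove c i j z j| = |z j| - t := by rw [hmj]; exact abs_sub_csgn t hj1 ht0.le htj
  have hinf' : ∀ k, |cmove c i j z k| ≤ c := by
    intro k
    by_cases hki : k = i
    · subst hki; rw [habsi]; linarith
    by_cases hkj : k = j
    · subst hkj; rw [habsj]; linarith [abs_nonneg (z k), hinf k]
    · rw [hmk k hki hkj]; exact hinf k
  refine ⟨hinf', ?_, ?_⟩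
  · have hpt : ∀ k, |cmove c i j z k| =
        |z k| + ((if k = i then t else 0) + (if k = j then -t else 0)) := by
      intro k
      by_cases hki : k = i
      · subst hki; rw [habsi]; simp [hij]
      by_cases hkj : k = j
      · subst hkj; rw [habsj]; simp [hij.symm]; ring
      · rw [hmk k hki hkj]; simp [hki, hkj]
    simp only [hpt, Finset.sum_add_distrib, Finset.sum_ite_eq', Finset.mem_univ, if_true]
    ring
  · have hsub : Finset.univ.filter (fun k => cmove c i j z k ≠ 0 ∧ |cmove c i j z k| < c) ⊆
        Finset.univ.filter (fun k => z k ≠ 0 ∧ |z k| < c) := by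
      intro k hk
      simp only [Finset.mem_filter, Finset.mem_univ, true_and] at hk ⊢
      by_cases hki : k = i
      · subst hki; exact ⟨hi1, hi2⟩
      by_cases hkj : k = j
      · subst hkj; exact ⟨hj1, hj2⟩
      · rwa [hmk k hki hkj] at hk
    rw [Finset.ssubset_iff_of_subset hsub]
    rcases le_total (c - |z i|) |z j| with hmin | hmin
    · refine ⟨i, ?_, ?_⟩
      · simp only [Finset.mem_filter, Finset.mem_univ, true_and]; exact ⟨hi1, hi2⟩
      · simp only [Finset.mem_filter, Finset.mem_univ, true_and, not_and, not_lt]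
        intro _
        rw [habsi, htdef, min_eq_left hmin]
        linarith
    · refine ⟨j, ?_, ?_⟩
      · simp only [Finset.mem_filter, Finset.mem_univ, true_and]; exact ⟨hj1, hj2⟩
      · simp only [Finset.mem_filter, Finset.mem_univ, true_and, not_and, not_lt]
        intro hne
        exfalso
        apply hne
        have : |cmove c i j z j| = 0 := by rw [habsj, htdef, min_eq_right hmin]; ring
        exact abs_eq_zero.mp this

lemma polytope_mem {N s : ℕ} (hs1 : 1 ≤ s) {c : ℝ} (hc : 0 < c) :
    ∀ n (z : EuclideanSpace ℝ (Fin N)),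
      (Finset.univ.filter (fun i => z i ≠ 0 ∧ |z i| < c)).card = n →
      (∀ i, |z i| ≤ c) → (∑ i, |z i|) ≤ s * c →
      z ∈ convexHull ℝ {v : EuclideanSpace ℝ (Fin N) |
        (Finset.univ.filter (fun i => v i ≠ 0)).card ≤ s ∧ ∀ i, |v i| ≤ c} := by
  intro n
  induction n using Nat.strong_induction_on with
  | _ n IH =>
  intro z hcard hinf hl1
  set F := Finset.univ.filter (fun i => z i ≠ 0 ∧ |z i| < c) with hF
  set Sp := Finset.univ.filter (fun i => z i ≠ 0) with hSp
  by_cases hs : Sp.card ≤ s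
  · exact subset_convexHull ℝ _ ⟨hs, hinf⟩
  push_neg at hs
  -- show 2 ≤ F.card
  have hFsub : F ⊆ Sp := by
    intro k hk
    simp only [hF, hSp, Finset.mem_filter, Finset.mem_univ, true_and] at hk ⊢
    exact hk.1
  have hF2 : 1 < F.card := by
    by_contra hcon
    push_neg at hcon
    -- sum over Sp \ F is (Sp.card - F.card) * c
    have hMval : ∀ k ∈ Sp \ F, |z k| = c := by
      intro k hk
      simp only [hF, hSp, Finset.mem_sdiff, Finset.mem_filter, Finset.mem_univ, true_and,
        not_and, not_lt] at hk
      exact le_antisymm (hinf k) (hk.2 hk.1)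
    have hMcard : s ≤ (Sp \ F).card := by
      rw [Finset.card_sdiff_of_subset hFsub]
      omega
    have hMsum : ((Sp \ F).card : ℝ) * c = ∑ k ∈ Sp \ F, |z k| := by
      rw [Finset.sum_congr rfl hMval]
      simp [mul_comm]
    have hbig : (s : ℝ) * c ≤ ∑ k ∈ Sp \ F, |z k| := by
      rw [← hMsum]
      have : (s:ℝ) ≤ ((Sp \ F).card : ℝ) := by exact_mod_cast hMcard
      nlinarith
    have hle : ∑ k ∈ Sp \ F, |z k| ≤ ∑ k, |z k| := by
      apply Finset.sum_le_sum_of_subset_of_nonneg (Finset.subset_univ _)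
      intro k _ _; exact abs_nonneg _
    -- strictness
    rcases Nat.eq_zero_or_pos F.card with hF0 | hF1
    · -- F empty : card (Sp \ F) = Sp.card ≥ s + 1
      have hMcard' : s + 1 ≤ (Sp \ F).card := by
        rw [Finset.card_sdiff_of_subset hFsub]; omega
      have hbig' : ((s : ℝ) + 1) * c ≤ ∑ k ∈ Sp \ F, |z k| := by
        rw [← hMsum]
        have : ((s:ℝ) + 1) ≤ ((Sp \ F).card : ℝ) := by exact_mod_cast hMcard'
        nlinarith
      linarith
    · -- F has exactly one element i₀ with |z i₀| > 0
      obtain ⟨i₀, hi₀⟩ := Finset.card_pos.mp hF1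
      have hi₀' : z i₀ ≠ 0 := by
        simp only [hF, Finset.mem_filter, Finset.mem_univ, true_and] at hi₀
        exact hi₀.1
      have hpos : 0 < |z i₀| := abs_pos.2 hi₀'
      have hsplit : ∑ k ∈ Sp \ F, |z k| + |z i₀| ≤ ∑ k, |z k| := by
        have hdisj : i₀ ∉ Sp \ F := by simp [Finset.mem_sdiff, hi₀]
        have : ∑ k ∈ insert i₀ (Sp \ F), |z k| = |z i₀| + ∑ k ∈ Sp \ F, |z k| :=
          Finset.sum_insert hdisj
        calc ∑ k ∈ Sp \ F, |z k| + |z i₀| = ∑ k ∈ insert i₀ (Sp \ F), |z k| := by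
              rw [this]; ring
          _ ≤ ∑ k, |z k| := by
              apply Finset.sum_le_sum_of_subset_of_nonneg (Finset.subset_univ _)
              intro k _ _; exact abs_nonneg _
      linarith
  -- obtain two fractional coordinates
  obtain ⟨i, hi, j, hj, hij⟩ := Finset.one_lt_card.mp hF2
  simp only [hF, Finset.mem_filter, Finset.mem_univ, true_and] at hi hj
  -- apply the step lemma in both directions
  obtain ⟨hp_inf, hp_sum, hp_ss⟩ := cmove_step hc hij z hi.1 hi.2 hj.1 hj.2 hinf
  obtain ⟨hn_inf, hn_sum, hn_ss⟩ := cmove_step hc hij.symm z hj.1 hj.2 hi.1 hi.2 hinf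
  set zp := cmove c i j z with hzp
  set zn := cmove c j i z with hzn
  have hp_mem : zp ∈ convexHull ℝ {v : EuclideanSpace ℝ (Fin N) |
      (Finset.univ.filter (fun i => v i ≠ 0)).card ≤ s ∧ ∀ i, |v i| ≤ c} := by
    apply IH _ (by rw [← hcard]; exact Finset.card_lt_card hp_ss) zp rfl hp_inf
    rw [hp_sum]; exact hl1
  have hn_mem : zn ∈ convexHull ℝ {v : EuclideanSpace ℝ (Fin N) |
      (Finset.univ.filter (fun i => v i ≠ 0)).card ≤ s ∧ ∀ i, |v i| ≤ c} := by
    apply IH _ (by rw [← hcard]; exact Finset.card_lt_card hn_ss) zn rfl hn_inf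
    rw [hn_sum]; exact hl1
  -- z is a convex combination of zp and zn
  set tp := min (c - |z i|) |z j| with htp
  set tn := min (c - |z j|) |z i| with htn
  have htp0 : 0 < tp := lt_min (by linarith [hi.2]) (abs_pos.2 hj.1)
  have htn0 : 0 < tn := lt_min (by linarith [hj.2]) (abs_pos.2 hi.1)
  set u := tp + tn with hu
  have hu0 : 0 < u := by positivity
  have hune : u ≠ 0 := ne_of_gt hu0
  set d : EuclideanSpace ℝ (Fin N) :=
    EuclideanSpace.single i (csgn (z i)) - EuclideanSpace.single j (csgn (z j)) with hd
  have hzp_eq : zp = z + tp • d := rfl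
  have hzn_eq : zn = z - tn • d := by
    show cmove c j i z = z - tn • d
    rw [cmove, hd, htn]
    module
  have hcomb : (tn / u) • zp + (tp / u) • zn = z := by
    rw [hzp_eq, hzn_eq]
    match_scalars
    · field_simp
      rw [hu]; ring
    all_goals ring
  rw [← hcomb]
  exact (convex_convexHull ℝ _) hp_mem hn_mem (by positivity) (by positivity)
    (by field_simp; rw [hu]; ring)

lemma sumsq_eq_normsq {N : ℕ} (x : EuclideanSpace ℝ (Fin N)) : (∑ i, (x i)^2) = ‖x‖^2 := by
  rw [EuclideanSpace.norm_eq, Real.sq_sqrt (by positivity)]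
  simp [Real.norm_eq_abs, sq_abs]

lemma sumsq_le_one {N : ℕ} (x : EuclideanSpace ℝ (Fin N)) (h : ‖x‖ ≤ 1) :
    (∑ i, (x i)^2) ≤ 1 := by
  rw [sumsq_eq_normsq]
  nlinarith [norm_nonneg x]

lemma norm_le_one_of_sumsq {N : ℕ} (x : EuclideanSpace ℝ (Fin N)) (h : (∑ i, (x i)^2) ≤ 1) :
    ‖x‖ ≤ 1 := by
  rw [EuclideanSpace.norm_eq]
  have : (∑ i, ‖x i‖^2) ≤ 1 := by simpa [Real.norm_eq_abs, sq_abs] using h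
  calc Real.sqrt (∑ i, ‖x i‖^2) ≤ Real.sqrt 1 := Real.sqrt_le_sqrt this
    _ = 1 := Real.sqrt_one

/-- Convexification: `conv(Σ_s^N ∩ B₂^N) ⊆ K_s^N ⊆ 2 conv(Σ_s^N ∩ B₂^N)`, where
`Σ_s^N` is the set of `s`-sparse vectors, `B₂^N` the Euclidean unit ball, and
`K_s^N = {x : ‖x‖₂ ≤ 1 ∧ ‖x‖₁ ≤ √s}`. -/
theorem convexification {N s : ℕ} (hs1 : 1 ≤ s) (hsN : s ≤ N) :
    convexHull ℝ ({x : EuclideanSpace ℝ (Fin N) |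
        (Finset.univ.filter (fun i => x i ≠ 0)).card ≤ s} ∩ {x | ‖x‖ ≤ 1})
      ⊆ {x : EuclideanSpace ℝ (Fin N) | ‖x‖ ≤ 1 ∧ (∑ i, |x i|) ≤ Real.sqrt s} ∧
    {x : EuclideanSpace ℝ (Fin N) | ‖x‖ ≤ 1 ∧ (∑ i, |x i|) ≤ Real.sqrt s}
      ⊆ (2 : ℝ) • convexHull ℝ ({x : EuclideanSpace ℝ (Fin N) |
        (Finset.univ.filter (fun i => x i ≠ 0)).card ≤ s} ∩ {x | ‖x‖ ≤ 1}) := by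
  have hs0 : (0:ℝ) < s := by exact_mod_cast hs1
  have hsqpos : 0 < Real.sqrt s := Real.sqrt_pos.2 hs0
  have hss : Real.sqrt s * Real.sqrt s = (s:ℝ) := Real.mul_self_sqrt hs0.le
  constructor
  · -- first inclusion
    apply convexHull_min
    · rintro x ⟨hx1, hx2⟩
      refine ⟨hx2, ?_⟩
      set T := Finset.univ.filter (fun i => x i ≠ 0) with hT
      have h1 : (∑ i, |x i|) = ∑ i ∈ T, |x i| := by
        symm
        apply Finset.sum_subset (Finset.subset_univ _)
        intro k _ hk
        simp only [hT, Finset.mem_filter, Finset.mem_univ, true_and, not_not] at hk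
        simp [hk]
      have hsum2 : (∑ i ∈ T, (x i)^2) ≤ 1 := by
        calc (∑ i ∈ T, (x i)^2) ≤ ∑ i, (x i)^2 :=
              Finset.sum_le_sum_of_subset_of_nonneg (Finset.subset_univ _)
                (fun _ _ _ => sq_nonneg _)
          _ ≤ 1 := sumsq_le_one x hx2
      have hcs : (∑ i ∈ T, 1 * |x i|)^2 ≤ (∑ i ∈ T, (1:ℝ)^2) * ∑ i ∈ T, |x i|^2 :=
        Finset.sum_mul_sq_le_sq_mul_sq _ _ _
      have hcs' : (∑ i ∈ T, |x i|)^2 ≤ (T.card : ℝ) * 1 := by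
        simp only [one_mul, one_pow, Finset.sum_const, nsmul_eq_mul, mul_one, sq_abs] at hcs
        calc (∑ i ∈ T, |x i|)^2 ≤ (T.card : ℝ) * ∑ i ∈ T, (x i)^2 := hcs
          _ ≤ (T.card : ℝ) * 1 := by
              apply mul_le_mul_of_nonneg_left hsum2 (by positivity)
      rw [h1]
      apply (Real.le_sqrt (Finset.sum_nonneg fun i _ => abs_nonneg _) hs0.le).mpr
      have hTs : (T.card : ℝ) ≤ (s : ℝ) := by exact_mod_cast (show T.card ≤ s from hx1)
      nlinarith
    · -- convexity of K
      intro x hx y hy a b ha hb hab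
      obtain ⟨hx2, hx1⟩ := hx
      obtain ⟨hy2, hy1⟩ := hy
      constructor
      · calc ‖a • x + b • y‖ ≤ ‖a • x‖ + ‖b • y‖ := norm_add_le _ _
          _ = a * ‖x‖ + b * ‖y‖ := by
              rw [norm_smul, norm_smul, Real.norm_eq_abs, Real.norm_eq_abs,
                abs_of_nonneg ha, abs_of_nonneg hb]
          _ ≤ a * 1 + b * 1 :=
              add_le_add (mul_le_mul_of_nonneg_left hx2 ha)
                (mul_le_mul_of_nonneg_left hy2 hb)
          _ = 1 := by rw [mul_one, mul_one, hab]
      · have hpt : ∀ i, |(a • x + b • y) i| ≤ a * |x i| + b * |y i| := by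
          intro i
          have happ : (a • x + b • y) i = a * x i + b * y i := by simp
          rw [happ]
          calc |a * x i + b * y i| ≤ |a * x i| + |b * y i| := abs_add_le _ _
            _ = a * |x i| + b * |y i| := by
                rw [abs_mul, abs_mul, abs_of_nonneg ha, abs_of_nonneg hb]
        calc (∑ i, |(a • x + b • y) i|) ≤ ∑ i, (a * |x i| + b * |y i|) :=
              Finset.sum_le_sum (fun i _ => hpt i)
          _ = a * (∑ i, |x i|) + b * (∑ i, |y i|) := by
              rw [Finset.sum_add_distrib, Finset.mul_sum, Finset.mul_sum]
          _ ≤ a * Real.sqrt s + b * Real.sqrt s :=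
              add_le_add (mul_le_mul_of_nonneg_left hx1 ha)
                (mul_le_mul_of_nonneg_left hy1 hb)
          _ = Real.sqrt s := by rw [← add_mul, hab, one_mul]
  · -- second inclusion
    intro x hx
    obtain ⟨hx2, hx1⟩ := hx
    set c : ℝ := (Real.sqrt s)⁻¹ with hcdef
    have hc : 0 < c := by positivity
    have hc2 : c^2 = 1 / (s:ℝ) := by
      rw [hcdef]
      field_simp
      rw [Real.sq_sqrt hs0.le]
    have hsc : (s:ℝ) * c = Real.sqrt s := by
      rw [hcdef]
      field_simp
      rw [Real.sq_sqrt hs0.le]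
    set y : EuclideanSpace ℝ (Fin N) := WithLp.toLp 2 (fun (i : Fin N) => if c < |x i| then x i else 0) with hy
    set z : EuclideanSpace ℝ (Fin N) := x - y with hz
    have hyi : ∀ i, y i = if c < |x i| then x i else 0 := fun i => rfl
    have hzi : ∀ i, z i = if c < |x i| then 0 else x i := by
      intro i
      have : z i = x i - y i := by simp [hz]
      rw [this, hyi]
      by_cases h : c < |x i| <;> simp [h]
    -- y is s-sparse
    have hysparse : (Finset.univ.filter (fun i => y i ≠ 0)).card ≤ s := by
      set T := Finset.univ.filter (fun i => y i ≠ 0) with hT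
      have hbig : ∀ i ∈ T, c^2 ≤ (x i)^2 := by
        intro i hi
        simp only [hT, Finset.mem_filter, Finset.mem_univ, true_and, hyi] at hi
        by_cases h : c < |x i|
        · nlinarith [abs_nonneg (x i), sq_abs (x i)]
        · simp [h] at hi
      have hTbound : (T.card : ℝ) * c^2 ≤ 1 := by
        calc (T.card : ℝ) * c^2 = ∑ _i ∈ T, c^2 := by simp [mul_comm]
          _ ≤ ∑ i ∈ T, (x i)^2 := Finset.sum_le_sum hbig
          _ ≤ ∑ i, (x i)^2 := Finset.sum_le_sum_of_subset_of_nonneg (Finset.subset_univ _)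
              (fun _ _ _ => sq_nonneg _)
          _ ≤ 1 := sumsq_le_one x hx2
      rw [hc2] at hTbound
      have : (T.card : ℝ) ≤ (s : ℝ) := by
        rw [div_eq_mul_inv, one_mul] at hTbound
        calc (T.card : ℝ) = (T.card : ℝ) * ((s:ℝ)⁻¹ * s) := by field_simp
          _ = ((T.card : ℝ) * (s:ℝ)⁻¹) * s := by ring
          _ ≤ 1 * s := mul_le_mul_of_nonneg_right hTbound hs0.le
          _ = s := one_mul _
      exact_mod_cast this
    -- y has norm ≤ 1
    have hynorm : ‖y‖ ≤ 1 := by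
      apply norm_le_one_of_sumsq
      calc (∑ i, (y i)^2) ≤ ∑ i, (x i)^2 := by
            apply Finset.sum_le_sum
            intro i _
            rw [hyi]
            by_cases h : c < |x i| <;> simp [h, sq_nonneg]
        _ ≤ 1 := sumsq_le_one x hx2
    -- z is in the polytope
    have hzinf : ∀ i, |z i| ≤ c := by
      intro i
      rw [hzi]
      by_cases h : c < |x i|
      · simp [h, hc.le]
      · simpa [h] using not_lt.mp h
    have hzl1 : (∑ i, |z i|) ≤ (s:ℝ) * c := by
      rw [hsc]
      calc (∑ i, |z i|) ≤ ∑ i, |x i| := by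
            apply Finset.sum_le_sum
            intro i _
            rw [hzi]
            by_cases h : c < |x i| <;> simp [h, abs_nonneg]
        _ ≤ Real.sqrt s := hx1
    have hzmem := polytope_mem hs1 hc _ z rfl hzinf hzl1
    -- the polytope is inside S
    set S : Set (EuclideanSpace ℝ (Fin N)) := {x : EuclideanSpace ℝ (Fin N) |
      (Finset.univ.filter (fun i => x i ≠ 0)).card ≤ s} ∩ {x | ‖x‖ ≤ 1} with hS
    have hPS : {v : EuclideanSpace ℝ (Fin N) |
        (Finset.univ.filter (fun i => v i ≠ 0)).card ≤ s ∧ ∀ i, |v i| ≤ c} ⊆ S := by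
      rintro v ⟨hv1, hv2⟩
      refine ⟨hv1, ?_⟩
      show ‖v‖ ≤ 1
      apply norm_le_one_of_sumsq
      set T := Finset.univ.filter (fun i => v i ≠ 0) with hT
      have : (∑ i, (v i)^2) = ∑ i ∈ T, (v i)^2 := by
        symm
        apply Finset.sum_subset (Finset.subset_univ _)
        intro k _ hk
        simp only [hT, Finset.mem_filter, Finset.mem_univ, true_and, not_not] at hk
        simp [hk]
      rw [this]
      calc (∑ i ∈ T, (v i)^2) ≤ ∑ _i ∈ T, c^2 := by
            apply Finset.sum_le_sum
            intro i _
            nlinarith [hv2 i, abs_nonneg (v i), sq_abs (v i)]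
        _ = (T.card : ℝ) * c^2 := by simp [mul_comm]
        _ ≤ (s : ℝ) * c^2 := by
            apply mul_le_mul_of_nonneg_right _ (sq_nonneg _)
            exact_mod_cast hv1
        _ = 1 := by rw [hc2]; field_simp
    have hzS : z ∈ convexHull ℝ S := convexHull_mono hPS hzmem
    have hyS : y ∈ convexHull ℝ S := subset_convexHull ℝ S ⟨hysparse, hynorm⟩
    have h2 : (2 : ℝ) • convexHull ℝ S = convexHull ℝ S + convexHull ℝ S := by
      have := (convex_convexHull ℝ S).add_smul (zero_le_one (α := ℝ)) zero_le_one
      rw [one_smul] at this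
      norm_num at this
      exact this
    show x ∈ (2 : ℝ) • convexHull ℝ S
    rw [h2]
    have hxyz : x = y + z := by rw [hz]; abel
    rw [hxyz]
    exact Set.add_mem_add hyS hzS
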